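/- The steady-state third component of the 3×3 stochastic matrix with rows (1−p_h, p₂'+p₃, p₁), (0, 1−p_h, p_h), (p_g, 0, 1−p_g), where p_h = p₁+p₂'+p₃ and all entries are nonnegative with p₁, p_g > 0, equals p_h/(p_h + p_g(1 + (p₂'+p₃)/p_h)). That is, the normalized left eigenvector for eigenvalue 1 has this value in its last coordinate. -/
import Mathlib


open Matrix

/-- Any steady-state distribution `π` (i.e. `π P = π`, `∑ π = 1`) of the 3×3 stochastic
matrix with rows `(1−p_h, p₂'+p₃, p₁)`, `(0, 1−p_h, p_h)`, `(p_g, 0, 1−p_g)`, where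
`p_h = p₁+p₂'+p₃`, all entries nonnegative, and `p₁, p_g > 0`, has third component
`p_h / (p_h + p_g(1 + (p₂'+p₃)/p_h))`. -/
theorem stmt7 (p1 p2' p3 pg ph : ℝ) (hp1 : 0 < p1) (hp2' : 0 ≤ p2') (hp3 : 0 ≤ p3)
    (hpg : 0 < pg) (hph : ph = p1 + p2' + p3) (hph1 : ph ≤ 1) (hpg1 : pg ≤ 1)
    (v : Fin 3 → ℝ)
    (hsteady : v ᵥ* !![1 - ph, p2' + p3, p1; 0, 1 - ph, ph; pg, 0, 1 - pg] = v)
    (hsum : ∑ i : Fin 3, v i = 1) :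
    v 2 = ph / (ph + pg * (1 + (p2' + p3) / ph)) := by
  have hph0 : 0 < ph := by nlinarith
  have h0 := congrFun hsteady 0
  have h1 := congrFun hsteady 1
  simp [vecMul, dotProduct, Fin.sum_univ_three] at h0 h1
  rw [Fin.sum_univ_three] at hsum
  have hv0 : v 0 * ph = v 2 * pg := by nlinarith
  have hv1 : v 1 * ph = v 0 * (p2' + p3) := by nlinarith
  have hden : ph + pg * (1 + (p2' + p3) / ph) > 0 := by
    have : (p2' + p3) / ph ≥ 0 := div_nonneg (by linarith) hph0.le
    nlinarith
  field_simp
  nlinarith [mul_pos hph0 hph0, hsum, hv0, hv1, mul_pos hpg hph0]
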